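/- For k ≥ 2 and n a multiple of 2^{k+1}, there exists a graph on n vertices with n·2^{k-1} edges admitting a proper edge-coloring with no rainbow path of length 2^k; hence ex*(n, P_{2^k}) ≥ 2^{2k}·⌊n/2^{k+1}⌋. -/

import Mathlib

open SimpleGraph

/-- A proper edge-coloring with colors in `β`. -/
def ProperEdgeColoring' {V β : Type*} (G : SimpleGraph V) (c : Sym2 V → β) : Prop :=
  ∀ ⦃u v w : V⦄, G.Adj u v → G.Adj u w → v ≠ w → c s(u, v) ≠ c s(u, w)

section Aux

lemma RT.add_self {k : ℕ} (v : Fin k → ZMod 2) : v + v = 0 := by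
  funext i
  exact CharTwo.add_self_eq_zero _

lemma RT.sum_univ_eq_zero {k : ℕ} (hk : 2 ≤ k) : ∑ v : Fin k → ZMod 2, v = 0 := by
  funext i
  rw [Finset.sum_apply, Pi.zero_apply]
  calc ∑ v : Fin k → ZMod 2, v i
      = ∑ p : ZMod 2 × ({j : Fin k // j ≠ i} → ZMod 2), p.1 :=
        Fintype.sum_equiv (Equiv.funSplitAt i (ZMod 2)) _ _ (fun v => rfl)
    _ = ∑ a : ZMod 2, (Fintype.card ({j : Fin k // j ≠ i} → ZMod 2)) • a := by
        rw [Fintype.sum_prod_type]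
        simp [Finset.sum_const, Finset.card_univ]
    _ = (Fintype.card ({j : Fin k // j ≠ i} → ZMod 2)) • (1 : ZMod 2) := by
        rw [← Finset.smul_sum, show (∑ a : ZMod 2, a) = 1 from by decide]
    _ = ((Fintype.card ({j : Fin k // j ≠ i} → ZMod 2) : ℕ) : ZMod 2) := by
        simp
    _ = 0 := by
        rw [ZMod.natCast_eq_zero_iff]
        have hne : Nonempty {j : Fin k // j ≠ i} := by
          obtain ⟨a, b, hab⟩ := Fintype.exists_pair_of_one_lt_card
            (α := Fin k) (by simp; omega)
          rcases eq_or_ne a i with rfl | ha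
          · exact ⟨⟨b, hab.symm⟩⟩
          · exact ⟨⟨a, ha⟩⟩
        have h1 : 1 ≤ Fintype.card {j : Fin k // j ≠ i} := Fintype.card_pos
        rw [Fintype.card_fun]
        calc (2:ℕ) = 2 ^ 1 := by norm_num
          _ ∣ 2 ^ Fintype.card {j : Fin k // j ≠ i} :=
            pow_dvd_pow 2 h1
          _ ∣ (Fintype.card (ZMod 2)) ^ Fintype.card {j : Fin k // j ≠ i} := by
            rw [ZMod.card]

lemma RT.sum_of_nodup {α : Type*} [Fintype α] [DecidableEq α] [AddCommMonoid α]
    (L : List α) (hnd : L.Nodup) (hlen : L.length = Fintype.card α) :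
    L.sum = ∑ a : α, a := by
  have huniv : L.toFinset = Finset.univ :=
    Finset.eq_univ_of_card _ (by rw [List.toFinset_card_of_nodup hnd, hlen])
  calc L.sum = (L.map id).sum := by simp
    _ = L.toFinset.sum id := (List.sum_toFinset id hnd).symm
    _ = ∑ a : α, a := by rw [huniv]; rfl

variable {k n m : ℕ} (e : Fin n ≃ Fin m × (Fin k → ZMod 2) × Bool)

/-- disjoint copies of `K_{2^k,2^k}`, transported to `Fin n`. -/
def RT.G : SimpleGraph (Fin n) where
  Adj u v := (e u).1 = (e v).1 ∧ (e u).2.2 ≠ (e v).2.2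
  symm := ⟨fun u v ⟨h1, h2⟩ => ⟨h1.symm, h2.symm⟩⟩
  loopless := ⟨fun u ⟨_, h⟩ => h rfl⟩

/-- the coloring `c(uv) = f(u) + f(v)`. -/
def RT.c : Sym2 (Fin n) → (Fin k → ZMod 2) :=
  Sym2.lift ⟨fun u v => (e u).2.1 + (e v).2.1, fun u v => add_comm _ _⟩

lemma RT.c_mk (u v : Fin n) : RT.c e s(u, v) = (e u).2.1 + (e v).2.1 := rfl

/-- edges are indexed by (block, label on false side, label on true side). -/
def RT.φ : Fin m × (Fin k → ZMod 2) × (Fin k → ZMod 2) → Sym2 (Fin n) :=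
  fun x => s(e.symm (x.1, x.2.1, false), e.symm (x.1, x.2.2, true))

lemma RT.φ_injective : Function.Injective (RT.φ e) := by
  rintro ⟨b, f, g⟩ ⟨b', f', g'⟩ h
  simp only [RT.φ, Sym2.eq_iff, EmbeddingLike.apply_eq_iff_eq, Prod.mk.injEq] at h
  rcases h with ⟨⟨h1, h2, _⟩, h3, h4, _⟩ | ⟨⟨_, _, h⟩, _⟩
  · simp_all
  · simp at h

lemma RT.edgeSet_eq : (RT.G e).edgeSet = Set.range (RT.φ e) := by
  ext z
  induction z using Sym2.ind with
  | _ u v =>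
    simp only [mem_edgeSet, Set.mem_range]
    constructor
    · rintro ⟨hb, hs⟩
      rcases hu : (e u).2.2 with _ | _
      · refine ⟨⟨(e u).1, (e u).2.1, (e v).2.1⟩, ?_⟩
        have hv : (e v).2.2 = true := by
          rcases hv : (e v).2.2 with _ | _ <;> simp_all
        have h1 : e.symm ((e u).1, (e u).2.1, false) = u := by
          rw [show ((e u).1, (e u).2.1, false) = e u by rw [← hu]]
          exact e.symm_apply_apply u
        have h2 : e.symm ((e u).1, (e v).2.1, true) = v := by
          rw [show ((e u).1, (e v).2.1, true) = e v by rw [← hv, hb]]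
          exact e.symm_apply_apply v
        simp only [RT.φ]
        rw [h1, h2]
      · refine ⟨⟨(e u).1, (e v).2.1, (e u).2.1⟩, ?_⟩
        have hv : (e v).2.2 = false := by
          rcases hv : (e v).2.2 with _ | _ <;> simp_all
        have h1 : e.symm ((e u).1, (e v).2.1, false) = v := by
          rw [show ((e u).1, (e v).2.1, false) = e v by rw [← hv, hb]]
          exact e.symm_apply_apply v
        have h2 : e.symm ((e u).1, (e u).2.1, true) = u := by
          rw [show ((e u).1, (e u).2.1, true) = e u by rw [← hu]]
          exact e.symm_apply_apply u
        simp only [RT.φ]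
        rw [h1, h2, Sym2.eq_swap]
    · rintro ⟨⟨b, f, g⟩, h⟩
      have : (RT.G e).Adj (e.symm (b, f, false)) (e.symm (b, g, true)) := by
        constructor <;> simp [RT.G]
      rw [show ((RT.G e).Adj u v) ↔ s(u,v) ∈ (RT.G e).edgeSet from Iff.rfl.symm] at *
      rw [← h]
      exact this

lemma RT.edgeSet_ncard (hm : 1 ≤ m ∨ True) :
    (RT.G e).edgeSet.ncard = m * (2 ^ k * 2 ^ k) := by
  rw [RT.edgeSet_eq, ← Set.image_univ, Set.ncard_image_of_injective _ (RT.φ_injective e),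
    Set.ncard_univ, Nat.card_eq_fintype_card]
  simp [Fintype.card_fun, ZMod.card]

/-- walk invariants: color-sum telescopes, block is constant, side tracks parity. -/
lemma RT.walk_inv {x y : Fin n} (p : (RT.G e).Walk x y) :
    (p.edges.map (RT.c e)).sum = (e x).2.1 + (e y).2.1 ∧
    (e x).1 = (e y).1 ∧ (((e x).2.2 = (e y).2.2) ↔ Even p.length) := by
  induction p with
  | nil => simp [RT.add_self]
  | cons h q ih =>
    obtain ⟨hsum, hb, hpar⟩ := ih
    rename_i x' v' y'
    obtain ⟨hb', hs'⟩ := id h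
    refine ⟨?_, hb'.trans hb, ?_⟩
    · rw [SimpleGraph.Walk.edges_cons, List.map_cons, List.sum_cons, RT.c_mk, hsum]
      have : (e x').2.1 + (e v').2.1 + ((e v').2.1 + (e y').2.1)
          = (e x').2.1 + (e y').2.1 + ((e v').2.1 + (e v').2.1) := by abel
      rw [this, RT.add_self, add_zero]
    · rw [SimpleGraph.Walk.length_cons, Nat.even_add_one, ← hpar]
      rcases hx : (e x').2.2 with _ | _ <;> rcases hv : (e v').2.2 with _ | _ <;>
        rcases hy : (e y').2.2 with _ | _ <;> simp_all

end Aux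

/-- For `k ≥ 2` and `n` divisible by `2^(k+1)`, there is a
graph on `n` vertices with `n·2^(k-1)` edges admitting a proper edge-coloring
with no rainbow path of length `2^k`; hence
`ex*(n, P_{2^k}) ≥ 2^(2k) · ⌊n / 2^(k+1)⌋`. -/
theorem rainbow_turan_lower_bound (k n : ℕ) (hk : 2 ≤ k) (hn : 2 ^ (k + 1) ∣ n) :
    ∃ (G : SimpleGraph (Fin n)) (c : Sym2 (Fin n) → (Fin k → ZMod 2)),
      G.edgeSet.ncard = n * 2 ^ (k - 1) ∧
      ProperEdgeColoring' G c ∧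
      (∀ (x y : Fin n) (p : G.Walk x y), p.IsPath → p.length = 2 ^ k →
        ¬ (p.edges.map c).Nodup) ∧
      2 ^ (2 * k) * (n / 2 ^ (k + 1)) ≤ G.edgeSet.ncard := by
  obtain ⟨m, hm⟩ := hn
  have hcard : Fintype.card (Fin n) = Fintype.card (Fin m × (Fin k → ZMod 2) × Bool) := by
    simp [Fintype.card_fun, ZMod.card, hm]
    ring
  let e : Fin n ≃ Fin m × (Fin k → ZMod 2) × Bool := Fintype.equivOfCardEq hcard
  have hpow : 2 ^ (k + 1) * 2 ^ (k - 1) = 2 ^ k * 2 ^ k := by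
    rw [← pow_add, ← pow_add]
    congr 1
    omega
  have hncard : (RT.G e).edgeSet.ncard = n * 2 ^ (k - 1) := by
    rw [RT.edgeSet_ncard e (Or.inr trivial), hm, ← hpow]
    ring
  refine ⟨RT.G e, RT.c e, hncard, ?_, ?_, ?_⟩
  · -- proper coloring
    rintro u v w ⟨hb1, hs1⟩ ⟨hb2, hs2⟩ hvw hc
    rw [RT.c_mk, RT.c_mk] at hc
    have hf : (e v).2.1 = (e w).2.1 := add_left_cancel hc
    have hbb : (e v).1 = (e w).1 := hb1.symm.trans hb2
    have hss : (e v).2.2 = (e w).2.2 := by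
      rcases h1 : (e u).2.2 with _ | _ <;> rcases h2 : (e v).2.2 with _ | _ <;>
        rcases h3 : (e w).2.2 with _ | _ <;> simp_all
    apply hvw
    apply e.injective
    exact Prod.ext hbb (Prod.ext hf hss)
  · -- no rainbow path of length 2^k
    intro x y p hp hlen hnd
    obtain ⟨hsum, hb, hpar⟩ := RT.walk_inv e p
    have hcardF : Fintype.card (Fin k → ZMod 2) = 2 ^ k := by
      simp [Fintype.card_fun, ZMod.card]
    have hlen' : (p.edges.map (RT.c e)).length = Fintype.card (Fin k → ZMod 2) := by
      rw [List.length_map, SimpleGraph.Walk.length_edges, hlen, hcardF]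
    have h0 : (e x).2.1 + (e y).2.1 = 0 := by
      rw [← hsum, RT.sum_of_nodup _ hnd hlen', RT.sum_univ_eq_zero hk]
    have hf : (e x).2.1 = (e y).2.1 := by
      have := congrArg (· + (e y).2.1) h0
      simpa [add_assoc, RT.add_self] using this
    have hss : (e x).2.2 = (e y).2.2 := by
      rw [hpar, hlen]
      exact (Nat.even_pow).2 ⟨even_two, by omega⟩
    have hxy : x = y := e.injective (Prod.ext hb (Prod.ext hf hss))
    subst hxy
    cases p with
    | nil =>
      simp at hlen
      have : (0:ℕ) < 2 ^ k := Nat.pow_pos (by norm_num)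
      omega
    | cons h q =>
      rw [SimpleGraph.Walk.cons_isPath_iff] at hp
      exact hp.2 q.end_mem_support
  · -- the quantitative bound
    rw [hncard, hm, Nat.mul_div_cancel_left _ (Nat.pow_pos (by norm_num))]
    apply le_of_eq
    have h2k : (2:ℕ) ^ (2 * k) = 2 ^ (k + 1) * 2 ^ (k - 1) := by
      rw [← pow_add]
      congr 1
      omega
    rw [h2k]
    ring
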